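/- For n ≥ 14, the maximum size M(n,2) of a 2-grain-error-correcting code of length n satisfies M(n,2) ≤ 2·⌊ 2^{n+2}·(2 + 2/(n−6)) / (2n(n−3)) ⌋. -/

import Mathlib

/-- `e` is a `t`-grain-error for `x`: weight at most `t`, `e₁ = 0`, and an error at
position `i` (2 ≤ i ≤ n) requires `x_i ≠ x_{i-1}`. (0-indexed here.) -/
def grainError {n : ℕ} (t : ℕ) (x e : Fin n → ZMod 2) : Prop :=
  (Finset.univ.filter fun i => e i ≠ 0).card ≤ t ∧
  (∀ i : Fin n, (i : ℕ) = 0 → e i = 0) ∧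
  (∀ i : Fin n, 0 < (i : ℕ) → e i ≠ 0 →
    x i ≠ x ⟨(i : ℕ) - 1, lt_of_le_of_lt (Nat.sub_le _ _) i.isLt⟩)

/-- The grain error-ball `B_{t,G}(x)`. -/
def grainBall {n : ℕ} (t : ℕ) (x : Fin n → ZMod 2) : Set (Fin n → ZMod 2) :=
  {y | ∃ e, grainError t x e ∧ y = x + e}

/-- The number of runs of a binary vector. -/
def runs {n : ℕ} (x : Fin n → ZMod 2) : ℕ :=
  (if n = 0 then 0 else 1) +
  (Finset.univ.filter fun i : Fin n =>
    0 < (i : ℕ) ∧ x i ≠ x ⟨(i : ℕ) - 1, lt_of_le_of_lt (Nat.sub_le _ _) i.isLt⟩).card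

def grainCorrecting {n : ℕ} (t : ℕ) (C : Finset (Fin n → ZMod 2)) : Prop :=
  ∀ x ∈ C, ∀ y ∈ C, x ≠ y → Disjoint (grainBall t x) (grainBall t y)

namespace GrainAux
open Finset

open Finset

lemma zmod2_xor (a b c d : ZMod 2) : (a + c ≠ b + d) ↔ ¬ ((a ≠ b) ↔ (c ≠ d)) := by
  revert a b c d; decide

lemma zmod2_ne (u v : ZMod 2) (hu : u ≠ 0) (hv : v ≠ 0) : u = v := by
  revert u v; decide

lemma core (n : ℕ) (X E : ℕ → ZMod 2) (S : Finset ℕ)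
    (hS : ∀ k, E k ≠ 0 ↔ k ∈ S) (hcard : S.card ≤ 2)
    (hS0 : ∀ k ∈ S, 0 < k ∧ k < n ∧ X k ≠ X (k-1)) :
    ((range n).filter fun k => 0 < k ∧ X k + E k ≠ X (k-1) + E (k-1)).card
      ≤ ((range n).filter fun k => 0 < k ∧ X k ≠ X (k-1)).card := by
  classical
  set Bx := (range n).filter fun k => 0 < k ∧ X k ≠ X (k-1) with hBx
  set T := (range n).filter fun k => 0 < k ∧ E k ≠ E (k-1) with hT
  -- By = (Bx \ T) ∪ (T \ Bx)
  have hBy : ((range n).filter fun k => 0 < k ∧ X k + E k ≠ X (k-1) + E (k-1))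
      = (Bx \ T) ∪ (T \ Bx) := by
    ext k
    simp only [hBx, hT, mem_union, mem_sdiff, mem_filter, mem_range]
    have := zmod2_xor (X k) (X (k-1)) (E k) (E (k-1))
    tauto
  rw [hBy, card_union_of_disjoint (disjoint_sdiff_sdiff)]
  have hsplit : Bx.card = (Bx \ T).card + (Bx ∩ T).card := by
    rw [Finset.card_sdiff_add_card_inter]
  rw [hsplit]
  have hmain : (T \ Bx).card ≤ (Bx ∩ T).card := by
    -- elements of S are in Bx
    have hSB : ∀ k ∈ S, k ∈ Bx := by
      intro k hk
      obtain ⟨h1, h2, h3⟩ := hS0 k hk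
      simp [hBx, mem_filter, mem_range, h1, h2, h3]
    -- membership of T forces k ∈ S ∨ k-1 ∈ S
    have hTS : ∀ k ∈ T, k ∈ S ∨ (k - 1) ∈ S := by
      intro k hk
      simp only [hT, mem_filter, mem_range] at hk
      by_contra h
      push_neg at h
      have e1 : E k = 0 := by
        by_contra he; exact h.1 ((hS k).mp he)
      have e2 : E (k-1) = 0 := by
        by_contra he; exact h.2 ((hS (k-1)).mp he)
      exact hk.2.2 (by rw [e1, e2])
    interval_cases hc : S.card
    · -- card 0
      have hSe : S = ∅ := card_eq_zero.mp hc
      have : T \ Bx = ∅ := by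
        apply eq_empty_of_forall_notMem
        intro k hk
        rcases hTS k (mem_sdiff.mp hk).1 with h | h <;> simp [hSe] at h
      simp [this]
    · -- card 1
      obtain ⟨a, ha⟩ := card_eq_one.mp hc
      have haS : a ∈ S := by simp [ha]
      have haBx := hSB a haS
      have haT : a ∈ T := by
        obtain ⟨h1, h2, _⟩ := hS0 a haS
        simp only [hT, mem_filter, mem_range]
        refine ⟨h2, h1, ?_⟩
        have hEa : E a ≠ 0 := (hS a).mpr haS
        have hEa1 : E (a-1) = 0 := by
          by_contra he
          have := (hS (a-1)).mp he
          rw [ha] at this; simp at this; omega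
        rw [hEa1]; exact hEa
      have hsub : T \ Bx ⊆ {a + 1} := by
        intro k hk
        rw [mem_sdiff] at hk
        rcases hTS k hk.1 with h | h
        · rw [ha] at h; simp at h; subst h
          exact absurd haBx (by exact fun hb => hk.2 hb)
        · rw [ha] at h; simp at h
          have hk0 : 0 < k := by
            simp only [hT, mem_filter] at hk; exact hk.1.2.1
          simp; omega
      calc (T \ Bx).card ≤ ({a+1} : Finset ℕ).card := card_le_card hsub
        _ = 1 := card_singleton _
        _ ≤ (Bx ∩ T).card := by
            apply card_pos.mpr ⟨a, mem_inter.mpr ⟨haBx, haT⟩⟩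
    · -- card 2
      obtain ⟨a, b, hab, hS2⟩ := card_eq_two.mp hc
      have haS : a ∈ S := by simp [hS2]
      have hbS : b ∈ S := by simp [hS2]
      have haBx := hSB a haS
      have hbBx := hSB b hbS
      have ha0 : 0 < a ∧ a < n := ⟨(hS0 a haS).1, (hS0 a haS).2.1⟩
      have hb0 : 0 < b ∧ b < n := ⟨(hS0 b hbS).1, (hS0 b hbS).2.1⟩
      have hmemT : ∀ c ∈ S, (c - 1) ∉ S → c ∈ T := by
        intro c hc hc1
        obtain ⟨h1, h2, _⟩ := hS0 c hc
        simp only [hT, mem_filter, mem_range]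
        refine ⟨h2, h1, ?_⟩
        have hEc : E c ≠ 0 := (hS c).mpr hc
        have hEc1 : E (c-1) = 0 := by
          by_contra he; exact hc1 ((hS (c-1)).mp he)
        rw [hEc1]; exact hEc
      by_cases hadj : b = a + 1 ∨ a = b + 1
      · -- adjacent case: S = {c, c+1}
        obtain ⟨c, hcS, hc1S, hSset⟩ :
            ∃ c, c ∈ S ∧ c + 1 ∈ S ∧ ∀ k ∈ S, k = c ∨ k = c + 1 := by
          rcases hadj with h | h
          · exact ⟨a, haS, by rw [← h]; exact hbS, by intro k hk; rw [hS2] at hk; simp at hk; omega⟩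
          · exact ⟨b, hbS, by rw [← h]; exact haS, by intro k hk; rw [hS2] at hk; simp at hk; omega⟩
        have hc0 : 0 < c := (hS0 c hcS).1
        have hcT : c ∈ T := by
          apply hmemT c hcS
          intro hmem
          rcases hSset _ hmem with h | h <;> omega
        have hcBx := hSB c hcS
        have hsub : T \ Bx ⊆ {c + 2} := by
          intro k hk
          rw [mem_sdiff] at hk
          have hk0 : 0 < k := by
            have := hk.1; simp only [hT, mem_filter] at this; exact this.2.1
          have hkS : k ∉ S := fun h => hk.2 (hSB k h)
          rcases hTS k hk.1 with h | h
          · exact absurd h hkS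
          · rcases hSset _ h with h1 | h1
            · -- k - 1 = c, so k = c + 1; but then E k ≠ 0 and E (k-1) ≠ 0, contra
              exfalso
              have hkc : k = c + 1 := by omega
              exact hkS (hkc ▸ hc1S)
            · simp; omega
        calc (T \ Bx).card ≤ ({c+2} : Finset ℕ).card := card_le_card hsub
          _ = 1 := card_singleton _
          _ ≤ (Bx ∩ T).card := card_pos.mpr ⟨c, mem_inter.mpr ⟨hcBx, hcT⟩⟩
      · -- non-adjacent
        push_neg at hadj
        have haT : a ∈ T := by
          apply hmemT a haS
          intro hmem; rw [hS2] at hmem; simp at hmem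
          rcases hmem with h | h <;> omega
        have hbT : b ∈ T := by
          apply hmemT b hbS
          intro hmem; rw [hS2] at hmem; simp at hmem
          rcases hmem with h | h <;> omega
        have hsub : T \ Bx ⊆ {a + 1, b + 1} := by
          intro k hk
          rw [mem_sdiff] at hk
          have hk0 : 0 < k := by
            have := hk.1; simp only [hT, mem_filter] at this; exact this.2.1
          have hkS : k ∉ S := fun h => hk.2 (hSB k h)
          rcases hTS k hk.1 with h | h
          · exact absurd h hkS
          · rw [hS2] at h; simp at h
            simp; omega
        have hsup : ({a, b} : Finset ℕ) ⊆ Bx ∩ T := by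
          intro k hk; simp at hk
          rcases hk with rfl | rfl
          · exact mem_inter.mpr ⟨haBx, haT⟩
          · exact mem_inter.mpr ⟨hbBx, hbT⟩
        calc (T \ Bx).card ≤ ({a+1, b+1} : Finset ℕ).card := card_le_card hsub
          _ ≤ 2 := card_insert_le _ _ |>.trans (by simp)
          _ = ({a, b} : Finset ℕ).card := (card_pair hab).symm
          _ ≤ (Bx ∩ T).card := card_le_card hsup
  omega


open Finset

def bsetF {n : ℕ} (x : Fin n → ZMod 2) : Finset (Fin n) :=
  Finset.univ.filter fun i =>
    0 < (i : ℕ) ∧ x i ≠ x ⟨(i : ℕ) - 1, lt_of_le_of_lt (Nat.sub_le _ _) i.isLt⟩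

def ext {n : ℕ} (x : Fin n → ZMod 2) : ℕ → ZMod 2 :=
  fun k => if h : k < n then x ⟨k, h⟩ else 0

lemma ext_lt {n : ℕ} (x : Fin n → ZMod 2) {k : ℕ} (h : k < n) :
    ext x k = x ⟨k, h⟩ := dif_pos h

lemma ext_add {n : ℕ} (x e : Fin n → ZMod 2) : ext (x + e) = ext x + ext e := by
  funext k
  simp only [ext, Pi.add_apply]
  split <;> simp

lemma card_filter_fin_nat {n : ℕ} (p : Fin n → Prop) [DecidablePred p]
    (q : ℕ → Prop) [DecidablePred q]
    (hpq : ∀ i : Fin n, p i ↔ q (i : ℕ)) :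
    (Finset.univ.filter p).card = ((range n).filter q).card := by
  refine Finset.card_nbij (i := fun i => (i : ℕ)) ?_ ?_ ?_
  · intro a ha
    simp only [mem_coe, mem_filter, mem_univ, true_and] at ha
    simp only [mem_coe, mem_filter, mem_range]
    exact ⟨a.isLt, (hpq a).mp ha⟩
  · intro a _ b _ h
    exact Fin.val_injective h
  · intro b hb
    simp only [Set.mem_image, mem_coe, mem_filter, mem_range] at hb ⊢
    exact ⟨⟨b, hb.1⟩, by simp only [mem_filter, mem_univ, true_and]; exact (hpq _).mpr hb.2, rfl⟩

lemma bsetF_card_eq {n : ℕ} (x : Fin n → ZMod 2) :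
    (bsetF x).card = ((range n).filter fun k => 0 < k ∧ ext x k ≠ ext x (k-1)).card := by
  apply card_filter_fin_nat
  intro i
  constructor
  · rintro ⟨h1, h2⟩
    refine ⟨h1, ?_⟩
    rw [ext_lt x i.isLt, ext_lt x (lt_of_le_of_lt (Nat.sub_le _ _) i.isLt)]
    exact h2
  · rintro ⟨h1, h2⟩
    refine ⟨h1, ?_⟩
    rw [ext_lt x i.isLt, ext_lt x (lt_of_le_of_lt (Nat.sub_le _ _) i.isLt)] at h2
    exact h2

lemma supp_card_eq {n : ℕ} (e : Fin n → ZMod 2) :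
    (Finset.univ.filter fun i => e i ≠ 0).card
      = ((range n).filter fun k => ext e k ≠ 0).card := by
  apply card_filter_fin_nat
  intro i
  rw [ext_lt e i.isLt]



lemma bset_mono {n : ℕ} (x e : Fin n → ZMod 2) (he : grainError 2 x e) :
    (bsetF (x + e)).card ≤ (bsetF x).card := by
  classical
  rw [bsetF_card_eq, bsetF_card_eq]
  have hext : ∀ k, ext (x + e) k = ext x k + ext e k := by
    intro k; rw [ext_add]; rfl
  have hgoal :
      ((range n).filter fun k => 0 < k ∧ ext (x+e) k ≠ ext (x+e) (k-1)).card
      = ((range n).filter fun k => 0 < k ∧ ext x k + ext e k ≠ ext x (k-1) + ext e (k-1)).card := by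
    congr 1
    apply filter_congr
    intro k _
    rw [hext k, hext (k-1)]
  rw [hgoal]
  apply core n (ext x) (ext e) ((range n).filter fun k => ext e k ≠ 0)
  · intro k
    simp only [mem_filter, mem_range]
    constructor
    · intro h
      refine ⟨?_, h⟩
      by_contra hk
      push_neg at hk
      exact h (dif_neg (by omega))
    · exact fun h => h.2
  · rw [← supp_card_eq]; exact he.1
  · intro k hk
    simp only [mem_filter, mem_range] at hk
    obtain ⟨hkn, hke⟩ := hk
    rw [ext_lt e hkn] at hke
    have hk0 : 0 < k := by
      rcases Nat.eq_zero_or_pos k with h | h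
      · exfalso; exact hke (he.2.1 ⟨k, hkn⟩ h)
      · exact h
    refine ⟨hk0, hkn, ?_⟩
    rw [ext_lt x hkn, ext_lt x (by omega : k - 1 < n)]
    exact he.2.2 ⟨k, hkn⟩ hk0 hke


open Finset

def F (m : ℕ) (b : ZMod 2) (T : Finset (Fin m)) : Fin (m+1) → ZMod 2 :=
  fun i => b + ((T.filter fun j : Fin m => (j : ℕ) < (i : ℕ)).card : ZMod 2)

lemma F_zero (m : ℕ) (b : ZMod 2) (T : Finset (Fin m)) : F m b T 0 = b := by
  have : (T.filter fun j : Fin m => (j : ℕ) < ((0 : Fin (m+1)) : ℕ)) = ∅ := by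
    apply filter_false_of_mem; intro j _; simp
  simp [F, this]

lemma filter_eq_card (m : ℕ) (T : Finset (Fin m)) (v : ℕ) :
    (T.filter fun j : Fin m => (j : ℕ) = v).card
      = if ∃ j ∈ T, (j : ℕ) = v then 1 else 0 := by
  split_ifs with h
  · obtain ⟨j0, hj0, hv⟩ := h
    rw [card_eq_one]
    refine ⟨j0, ?_⟩
    ext j
    simp only [mem_filter, mem_singleton]
    constructor
    · rintro ⟨hj, hjv⟩
      exact Fin.val_injective (by rw [hjv, hv])
    · rintro rfl; exact ⟨hj0, hv⟩
  · rw [card_eq_zero]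
    apply filter_false_of_mem
    intro j hj hjv
    exact h ⟨j, hj, hjv⟩

/-- boundary characterization -/
lemma F_boundary (m : ℕ) (b : ZMod 2) (T : Finset (Fin m)) (i : Fin (m+1))
    (hi : 0 < (i : ℕ)) :
    (F m b T i ≠ F m b T ⟨(i : ℕ) - 1, lt_of_le_of_lt (Nat.sub_le _ _) i.isLt⟩)
      ↔ ∃ j ∈ T, (j : ℕ) = (i : ℕ) - 1 := by
  have hsplit : (T.filter fun j : Fin m => (j : ℕ) < (i : ℕ))
      = (T.filter fun j : Fin m => (j : ℕ) < (i : ℕ) - 1) ∪ (T.filter fun j : Fin m => (j : ℕ) = (i : ℕ) - 1) := by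
    rw [← filter_or]
    apply filter_congr
    intro j _
    constructor
    · intro h; omega
    · intro h; omega
  have hdisj : Disjoint (T.filter fun j : Fin m => (j : ℕ) < (i : ℕ) - 1)
      (T.filter fun j : Fin m => (j : ℕ) = (i : ℕ) - 1) := by
    apply disjoint_filter_filter'
    rw [disjoint_iff_inf_le]
    intro j hj
    simp only [Pi.inf_apply, inf_Prop_eq] at hj
    omega
  have hcard : (T.filter fun j : Fin m => (j : ℕ) < (i : ℕ)).card
      = (T.filter fun j : Fin m => (j : ℕ) < (i : ℕ) - 1).card
        + (T.filter fun j : Fin m => (j : ℕ) = (i : ℕ) - 1).card := by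
    rw [hsplit, card_union_of_disjoint hdisj]
  constructor
  · intro hne
    by_contra h
    apply hne
    simp only [F]
    congr 1
    rw [hcard, filter_eq_card]
    rw [if_neg h]
    norm_num
  · intro h hne
    simp only [F, add_right_inj] at hne
    rw [hcard, filter_eq_card, if_pos h] at hne
    push_cast at hne
    simp at hne

lemma F_bset_card (m : ℕ) (b : ZMod 2) (T : Finset (Fin m)) :
    (bsetF (F m b T)).card = T.card := by
  have himg : bsetF (F m b T) = T.image (fun j : Fin m => (⟨(j : ℕ) + 1, by omega⟩ : Fin (m+1))) := by
    ext i
    simp only [bsetF, mem_filter, mem_univ, true_and, mem_image]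
    constructor
    · rintro ⟨hi, hne⟩
      obtain ⟨j, hj, hjv⟩ := (F_boundary m b T i hi).mp hne
      exact ⟨j, hj, by apply Fin.val_injective; simp; omega⟩
    · rintro ⟨j, hj, rfl⟩
      refine ⟨by simp, ?_⟩
      apply (F_boundary m b T _ (by simp)).mpr
      exact ⟨j, hj, by simp⟩
  rw [himg, card_image_of_injective]
  intro a b hab
  apply Fin.val_injective
  have := congrArg Fin.val hab
  simpa using this

lemma F_injective (m : ℕ) : Function.Injective (fun p : ZMod 2 × Finset (Fin m) => F m p.1 p.2) := by
  rintro ⟨b, T⟩ ⟨b', T'⟩ h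
  simp only at h
  have hb : b = b' := by
    rw [← F_zero m b T, ← F_zero m b' T', h]
  subst hb
  suffices hT : T = T' by rw [hT]
  ext j
  have hiv : 0 < ((⟨(j : ℕ) + 1, by omega⟩ : Fin (m+1)) : ℕ) := by simp
  have h1 := F_boundary m b T ⟨(j : ℕ) + 1, by omega⟩ hiv
  have h2 := F_boundary m b T' ⟨(j : ℕ) + 1, by omega⟩ hiv
  rw [h] at h1
  have hchar : ∀ (U : Finset (Fin m)),
      (∃ j' ∈ U, (j' : ℕ) = ((⟨(j : ℕ) + 1, by omega⟩ : Fin (m+1)) : ℕ) - 1) ↔ j ∈ U := by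
    intro U
    constructor
    · rintro ⟨j', hj', hv⟩
      have : j' = j := Fin.val_injective (by simpa using hv)
      rwa [← this]
    · intro hj; exact ⟨j, hj, by simp⟩
  rw [hchar T] at h1
  rw [hchar T'] at h2
  rw [← h1, ← h2]

lemma F_bijective (m : ℕ) :
    Function.Bijective (fun p : ZMod 2 × Finset (Fin m) => F m p.1 p.2) := by
  rw [Fintype.bijective_iff_injective_and_card]
  refine ⟨F_injective m, ?_⟩
  simp only [Fintype.card_prod, Fintype.card_finset, Fintype.card_fun, Fintype.card_fin]
  have : Fintype.card (ZMod 2) = 2 := by simp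
  rw [this, pow_succ]
  ring

lemma class_eq_image (m : ℕ) (b : ZMod 2) :
    (univ.filter fun y : Fin (m+1) → ZMod 2 => y 0 = b)
      = (univ : Finset (Finset (Fin m))).image (F m b) := by
  ext y
  simp only [mem_filter, mem_univ, true_and, mem_image]
  constructor
  · intro hy
    obtain ⟨⟨b', T⟩, hp⟩ := (F_bijective m).2 y
    simp only at hp
    have hb : b' = b := by rw [← hy, ← hp, F_zero]
    exact ⟨T, by rw [← hp, hb]⟩
  · rintro ⟨T, rfl⟩; exact F_zero m b T

lemma sum_class (m : ℕ) (b : ZMod 2) (f : ℕ → ℚ) :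
    ∑ y ∈ univ.filter (fun y : Fin (m+1) → ZMod 2 => y 0 = b), f (bsetF y).card
      = ∑ k ∈ range (m+1), (m.choose k : ℚ) * f k := by
  rw [class_eq_image, sum_image]
  · have h1 : ∀ T : Finset (Fin m), f (bsetF (F m b T)).card = f T.card := by
      intro T; rw [F_bset_card]
    rw [Finset.sum_congr rfl (fun T _ => h1 T)]
    rw [← Finset.powerset_univ, Finset.sum_powerset_apply_card]
    simp only [card_univ, Fintype.card_fin, nsmul_eq_mul]
  · intro T _ T' _ h
    have := F_injective m (a₁ := (b, T)) (a₂ := (b, T')) h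
    exact (Prod.mk.injEq _ _ _ _).mp this |>.2


open Finset

def g (k : ℕ) : ℕ := k.choose 2 + k + 1

lemma g_pos (k : ℕ) : 0 < g k := by simp [g]

lemma g_mono : Monotone g := by
  intro a b hab
  unfold g
  have := Nat.choose_le_choose 2 hab
  omega

lemma two_g (k : ℕ) : 2 * g k = k^2 + k + 2 := by
  induction k with
  | zero => simp [g]
  | succ k ih =>
    unfold g at ih ⊢
    rw [Nat.choose_succ_succ' k 1]
    simp only [Nat.choose_one_right]
    ring_nf
    ring_nf at ih
    omega

def ind {n : ℕ} (T : Finset (Fin n)) : Fin n → ZMod 2 := fun i => if i ∈ T then 1 else 0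

def err {n : ℕ} (x : Fin n → ZMod 2) : Finset (Finset (Fin n)) :=
  (bsetF x).powerset.filter fun T => T.card ≤ 2

lemma err_card {n : ℕ} (x : Fin n → ZMod 2) : (err x).card = g (bsetF x).card := by
  have herr : err x = powersetCard 0 (bsetF x) ∪ powersetCard 1 (bsetF x)
      ∪ powersetCard 2 (bsetF x) := by
    ext T
    simp only [err, mem_filter, mem_powerset, mem_union, mem_powersetCard]
    constructor
    · rintro ⟨h1, h2⟩
      interval_cases h : T.card
      · exact Or.inl (Or.inl ⟨h1, rfl⟩)
      · exact Or.inl (Or.inr ⟨h1, rfl⟩)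
      · exact Or.inr ⟨h1, rfl⟩
    · rintro ((⟨h1, h2⟩ | ⟨h1, h2⟩) | ⟨h1, h2⟩) <;> exact ⟨h1, by omega⟩
  have hd1 : Disjoint (powersetCard 0 (bsetF x) ∪ powersetCard 1 (bsetF x))
      (powersetCard 2 (bsetF x)) := by
    rw [disjoint_left]
    intro T hT hT2
    rw [mem_powersetCard] at hT2
    rcases mem_union.mp hT with h | h <;> (rw [mem_powersetCard] at h; omega)
  have hd0 : Disjoint (powersetCard 0 (bsetF x)) (powersetCard 1 (bsetF x)) := by
    rw [disjoint_left]
    intro T hT hT1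
    rw [mem_powersetCard] at hT hT1
    omega
  rw [herr, card_union_of_disjoint hd1, card_union_of_disjoint hd0,
    card_powersetCard, card_powersetCard, card_powersetCard]
  simp [g, Nat.choose_one_right]
  omega

lemma ind_grainError {n : ℕ} (x : Fin n → ZMod 2) (T : Finset (Fin n)) (hT : T ∈ err x) :
    grainError 2 x (ind T) := by
  rw [err, mem_filter, mem_powerset] at hT
  obtain ⟨hsub, hcard⟩ := hT
  have hsupp : (Finset.univ.filter fun i => ind T i ≠ 0) = T := by
    ext i
    simp only [mem_filter, mem_univ, true_and, ind]
    by_cases h : i ∈ T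
    · simp [h]
    · simp [h]
  have hmem : ∀ i ∈ T, 0 < (i : ℕ) ∧
      x i ≠ x ⟨(i : ℕ) - 1, lt_of_le_of_lt (Nat.sub_le _ _) i.isLt⟩ := by
    intro i hi
    have := hsub hi
    rw [bsetF, mem_filter] at this
    exact this.2
  refine ⟨by rw [hsupp]; exact hcard, ?_, ?_⟩
  · intro i hi
    rw [ind]
    split_ifs with h
    · exact absurd (hmem i h).1 (by omega)
    · rfl
  · intro i hi hne
    have : i ∈ T := by
      by_contra h
      rw [ind] at hne
      simp [h] at hne
    exact (hmem i this).2

def ballI {n : ℕ} (x : Fin n → ZMod 2) : Finset (Fin n → ZMod 2) :=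
  (err x).image fun T => x + ind T

lemma ballI_sub {n : ℕ} (x : Fin n → ZMod 2) : ∀ y ∈ ballI x, y ∈ grainBall 2 x := by
  intro y hy
  rw [ballI, mem_image] at hy
  obtain ⟨T, hT, rfl⟩ := hy
  exact ⟨ind T, ind_grainError x T hT, rfl⟩

lemma ballI_first {n : ℕ} (x : Fin n → ZMod 2) (i : Fin n) (hi : (i : ℕ) = 0) :
    ∀ y ∈ ballI x, y i = x i := by
  intro y hy
  rw [ballI, mem_image] at hy
  obtain ⟨T, hT, rfl⟩ := hy
  have := (ind_grainError x T hT).2.1 i hi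
  simp [this]

lemma ballI_sum {n : ℕ} (x : Fin n → ZMod 2)
    (hmono : ∀ y ∈ ballI x, (bsetF y).card ≤ (bsetF x).card) :
    (1 : ℚ) ≤ ∑ y ∈ ballI x, ((g (bsetF y).card : ℚ))⁻¹ := by
  have hinj : ∀ T ∈ err x, ∀ T' ∈ err x, x + ind T = x + ind T' → T = T' := by
    intro T _ T' _ h
    have h2 : ind T = ind T' := by
      funext i
      have := congrFun h i
      simpa using this
    ext i
    have := congrFun h2 i
    simp only [ind] at this
    by_cases h1 : i ∈ T <;> by_cases hb : i ∈ T'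
    · simp [h1, hb]
    · rw [if_pos h1, if_neg hb] at this; exact absurd this one_ne_zero
    · rw [if_neg h1, if_pos hb] at this; exact absurd this.symm one_ne_zero
    · simp [h1, hb]
  rw [ballI, sum_image hinj]
  have hbound : ∀ T ∈ err x,
      ((g (bsetF x).card : ℚ))⁻¹ ≤ ((g (bsetF (x + ind T)).card : ℚ))⁻¹ := by
    intro T hT
    have h1 : (bsetF (x + ind T)).card ≤ (bsetF x).card := by
      apply hmono
      rw [ballI, mem_image]
      exact ⟨T, hT, rfl⟩
    have h2 : g (bsetF (x + ind T)).card ≤ g (bsetF x).card := g_mono h1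
    apply inv_anti₀
    · exact_mod_cast g_pos _
    · exact_mod_cast h2
  calc (1 : ℚ) = (err x).card * ((g (bsetF x).card : ℚ))⁻¹ := by
        rw [err_card]
        rw [mul_inv_cancel₀]
        exact_mod_cast (g_pos _).ne'
    _ = ∑ _T ∈ err x, ((g (bsetF x).card : ℚ))⁻¹ := by rw [sum_const, nsmul_eq_mul]
    _ ≤ ∑ T ∈ err x, ((g (bsetF (x + ind T)).card : ℚ))⁻¹ := sum_le_sum hbound


open Finset

lemma g_cast (k : ℕ) : (g k : ℚ) = ((k:ℚ)^2 + (k:ℚ) + 2) / 2 := by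
  have h := two_g k
  have h2 : ((2 * g k : ℕ) : ℚ) = ((k^2 + k + 2 : ℕ) : ℚ) := by rw [h]
  push_cast at h2
  linarith

lemma A1 (k : ℕ) : ((g k : ℚ))⁻¹ ≤
    2/(((k:ℚ)+1)*((k:ℚ)+2)) + 4/(((k:ℚ)+1)*((k:ℚ)+2)*((k:ℚ)+3))
      + (264/29)/(((k:ℚ)+1)*((k:ℚ)+2)*((k:ℚ)+3)*((k:ℚ)+4)) := by
  have hg := g_cast k
  set q := (k:ℚ) with hqdef
  have hq : 0 ≤ q := Nat.cast_nonneg k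
  have hA : (0:ℚ) < q^2 + q + 2 := by nlinarith
  have hfact : 0 ≤ (2*q - 13) * (q - 7) := by
    rcases le_or_gt (k:ℕ) 6 with h | h
    · have h6 : q ≤ 6 := by rw [hqdef]; exact_mod_cast h
      nlinarith
    · have h7 : 7 ≤ q := by rw [hqdef]; exact_mod_cast h
      nlinarith
  have hR : 2/((q+1)*(q+2)) + 4/((q+1)*(q+2)*(q+3)) + (264/29)/((q+1)*(q+2)*(q+3)*(q+4))
      = (58*(q+3)*(q+4) + 116*(q+4) + 264) / (29*(q+1)*(q+2)*(q+3)*(q+4)) := by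
    field_simp
    ring
  rw [hg, inv_div, hR, div_le_div_iff₀ hA (by positivity)]
  nlinarith [hfact]

lemma key2 (m k : ℕ) : (m+1)*(m+2) * m.choose k = (k+1)*(k+2) * (m+2).choose (k+2) := by
  have h1 := Nat.add_one_mul_choose_eq m k
  have h2 := Nat.add_one_mul_choose_eq (m+1) (k+1)
  calc (m+1)*(m+2)*m.choose k = (m+2)*((m+1)*m.choose k) := by ring
    _ = (m+2)*((m+1).choose (k+1)*(k+1)) := by rw [← h1]
    _ = (k+1)*((m+2)*(m+1).choose (k+1)) := by ring
    _ = (k+1)*((m+2).choose (k+2)*(k+2)) := by rw [← h2]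
    _ = (k+1)*(k+2)*(m+2).choose (k+2) := by ring

lemma key3 (m k : ℕ) :
    (m+1)*(m+2)*(m+3) * m.choose k = (k+1)*(k+2)*(k+3) * (m+3).choose (k+3) := by
  have h1 := key2 m k
  have h2 := Nat.add_one_mul_choose_eq (m+2) (k+2)
  calc (m+1)*(m+2)*(m+3)*m.choose k = (m+3)*((m+1)*(m+2)*m.choose k) := by ring
    _ = (m+3)*((k+1)*(k+2)*(m+2).choose (k+2)) := by rw [h1]
    _ = (k+1)*(k+2)*((m+3)*(m+2).choose (k+2)) := by ring
    _ = (k+1)*(k+2)*((m+3).choose (k+3)*(k+3)) := by rw [← h2]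
    _ = (k+1)*(k+2)*(k+3)*(m+3).choose (k+3) := by ring

lemma key4 (m k : ℕ) :
    (m+1)*(m+2)*(m+3)*(m+4) * m.choose k
      = (k+1)*(k+2)*(k+3)*(k+4) * (m+4).choose (k+4) := by
  have h1 := key3 m k
  have h2 := Nat.add_one_mul_choose_eq (m+3) (k+3)
  calc (m+1)*(m+2)*(m+3)*(m+4)*m.choose k = (m+4)*((m+1)*(m+2)*(m+3)*m.choose k) := by ring
    _ = (m+4)*((k+1)*(k+2)*(k+3)*(m+3).choose (k+3)) := by rw [h1]
    _ = (k+1)*(k+2)*(k+3)*((m+4)*(m+3).choose (k+3)) := by ring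
    _ = (k+1)*(k+2)*(k+3)*((m+4).choose (k+4)*(k+4)) := by rw [← h2]
    _ = (k+1)*(k+2)*(k+3)*(k+4)*(m+4).choose (k+4) := by ring

lemma sum_choose_le (m j : ℕ) :
    ∑ k ∈ range (m+1), ((m+j).choose (k+j)) ≤ 2^(m+j) := by
  have himg : ∑ k ∈ range (m+1), (m+j).choose (k+j)
      = ∑ i ∈ (range (m+1)).image (· + j), (m+j).choose i := by
    rw [sum_image]
    intro a _ b _ h
    simp only at h
    omega
  rw [himg]
  have hsub : (range (m+1)).image (· + j) ⊆ range (m+j+1) := by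
    intro i hi
    simp only [mem_image, mem_range] at hi ⊢
    omega
  calc _ ≤ ∑ i ∈ range (m+j+1), (m+j).choose i := sum_le_sum_of_subset hsub
    _ = 2^(m+j) := Nat.sum_range_choose (m+j)

lemma final_ineq (m : ℕ) (hm : 13 ≤ m) :
    2/(((m:ℚ)+1)*((m:ℚ)+2)) * 2^(m+2)
      + 4/(((m:ℚ)+1)*((m:ℚ)+2)*((m:ℚ)+3)) * 2^(m+3)
      + (264/29)/(((m:ℚ)+1)*((m:ℚ)+2)*((m:ℚ)+3)*((m:ℚ)+4)) * 2^(m+4)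
    ≤ ((2:ℚ) ^ (m + 3) * (2 + 2 / (((m:ℚ)+1) - 6))) / (2 * ((m:ℚ)+1) * (((m:ℚ)+1) - 3)) := by
  have hq : (13:ℚ) ≤ (m:ℚ) := by exact_mod_cast hm
  set q := (m:ℚ) with hqd
  have hp : (0:ℚ) < 2^m := by positivity
  have h1 : (0:ℚ) < q + 1 := by linarith
  have h2 : (0:ℚ) < q + 2 := by linarith
  have h3 : (0:ℚ) < q + 3 := by linarith
  have h4 : (0:ℚ) < q + 4 := by linarith
  have h5 : (0:ℚ) < q - 5 := by linarith
  have h6 : (0:ℚ) < q - 2 := by linarith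
  have hpow2 : (2:ℚ)^(m+2) = 2^m * 4 := by rw [pow_add]; norm_num
  have hpow3 : (2:ℚ)^(m+3) = 2^m * 8 := by rw [pow_add]; norm_num
  have hpow4 : (2:ℚ)^(m+4) = 2^m * 16 := by rw [pow_add]; norm_num
  have key : 2/((q+1)*(q+2)) * 4 + 4/((q+1)*(q+2)*(q+3)) * 8
      + (264/29)/((q+1)*(q+2)*(q+3)*(q+4)) * 16
      ≤ (8 * (2 + 2/(q - 5))) / (2*(q+1)*(q-2)) := by
    have hD : (0:ℚ) ≤ 232*q^3 + 2504*q^2 + 30960*q - 129472 := by nlinarith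
    have hL : 2/((q+1)*(q+2)) * 4 + 4/((q+1)*(q+2)*(q+3)) * 8
        + (264/29)/((q+1)*(q+2)*(q+3)*(q+4)) * 16
        = (232*(q+3)*(q+4) + 928*(q+4) + 4224) / (29*(q+1)*(q+2)*(q+3)*(q+4)) := by
      field_simp
      ring
    have hR : (8 * (2 + 2/(q - 5))) / (2*(q+1)*(q-2))
        = (8*(q-4)) / ((q-5)*(q+1)*(q-2)) := by
      field_simp
      ring
    rw [hL, hR, div_le_div_iff₀ (by positivity) (by positivity)]
    nlinarith [mul_nonneg hD h1.le]
  have hrhs : ((2:ℚ) ^ (m + 3) * (2 + 2 / ((q+1) - 6))) / (2 * (q+1) * ((q+1) - 3))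
      = 2^m * ((8 * (2 + 2/(q - 5))) / (2*(q+1)*(q-2))) := by
    have e1 : (q+1) - 6 = q - 5 := by ring
    have e2 : (q+1) - 3 = q - 2 := by ring
    rw [e1, e2, hpow3]
    ring
  rw [hrhs, hpow2, hpow3, hpow4]
  calc 2/((q+1)*(q+2)) * (2^m * 4) + 4/((q+1)*(q+2)*(q+3)) * (2^m * 8)
        + (264/29)/((q+1)*(q+2)*(q+3)*(q+4)) * (2^m * 16)
      = 2^m * (2/((q+1)*(q+2)) * 4 + 4/((q+1)*(q+2)*(q+3)) * 8
          + (264/29)/((q+1)*(q+2)*(q+3)*(q+4)) * 16) := by ring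
    _ ≤ 2^m * ((8 * (2 + 2/(q - 5))) / (2*(q+1)*(q-2))) :=
        mul_le_mul_of_nonneg_left key hp.le

lemma main_sum (m : ℕ) (hm : 13 ≤ m) :
    ∑ k ∈ range (m+1), (m.choose k : ℚ) * ((g k : ℚ))⁻¹
      ≤ ((2:ℚ) ^ (m + 3) * (2 + 2 / (((m:ℚ)+1) - 6))) / (2 * ((m:ℚ)+1) * (((m:ℚ)+1) - 3)) := by
  have hm1 : (0:ℚ) < (m:ℚ) + 1 := by positivity
  have hm2 : (0:ℚ) < (m:ℚ) + 2 := by positivity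
  have hm3 : (0:ℚ) < (m:ℚ) + 3 := by positivity
  have hm4 : (0:ℚ) < (m:ℚ) + 4 := by positivity
  have step1 : ∑ k ∈ range (m+1), (m.choose k : ℚ) * ((g k : ℚ))⁻¹
      ≤ ∑ k ∈ range (m+1), ((m.choose k : ℚ) * (2/(((k:ℚ)+1)*((k:ℚ)+2)))
          + (m.choose k : ℚ) * (4/(((k:ℚ)+1)*((k:ℚ)+2)*((k:ℚ)+3)))
          + (m.choose k : ℚ) * ((264/29)/(((k:ℚ)+1)*((k:ℚ)+2)*((k:ℚ)+3)*((k:ℚ)+4)))) := by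
    apply sum_le_sum
    intro k _
    have := A1 k
    have hc : (0:ℚ) ≤ (m.choose k : ℚ) := Nat.cast_nonneg _
    nlinarith [mul_le_mul_of_nonneg_left this hc]
  rw [Finset.sum_add_distrib, Finset.sum_add_distrib] at step1
  -- term 2
  have e2 : ∀ k, (m.choose k : ℚ) * (2/(((k:ℚ)+1)*((k:ℚ)+2)))
      = 2/(((m:ℚ)+1)*((m:ℚ)+2)) * ((m+2).choose (k+2) : ℚ) := by
    intro k
    have hc : ((m:ℚ)+1)*((m:ℚ)+2)*(m.choose k : ℚ)
        = ((k:ℚ)+1)*((k:ℚ)+2)*((m+2).choose (k+2) : ℚ) := by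
      have := key2 m k
      have h2 : (((m+1)*(m+2) * m.choose k : ℕ) : ℚ)
          = (((k+1)*(k+2) * (m+2).choose (k+2) : ℕ) : ℚ) := by rw [this]
      push_cast at h2
      linarith
    have hk1 : (0:ℚ) < (k:ℚ) + 1 := by positivity
    have hk2 : (0:ℚ) < (k:ℚ) + 2 := by positivity
    field_simp
    linarith
  have e3 : ∀ k, (m.choose k : ℚ) * (4/(((k:ℚ)+1)*((k:ℚ)+2)*((k:ℚ)+3)))
      = 4/(((m:ℚ)+1)*((m:ℚ)+2)*((m:ℚ)+3)) * ((m+3).choose (k+3) : ℚ) := by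
    intro k
    have hc : ((m:ℚ)+1)*((m:ℚ)+2)*((m:ℚ)+3)*(m.choose k : ℚ)
        = ((k:ℚ)+1)*((k:ℚ)+2)*((k:ℚ)+3)*((m+3).choose (k+3) : ℚ) := by
      have := key3 m k
      have h2 : (((m+1)*(m+2)*(m+3) * m.choose k : ℕ) : ℚ)
          = (((k+1)*(k+2)*(k+3) * (m+3).choose (k+3) : ℕ) : ℚ) := by rw [this]
      push_cast at h2
      linarith
    have hk1 : (0:ℚ) < (k:ℚ) + 1 := by positivity
    have hk2 : (0:ℚ) < (k:ℚ) + 2 := by positivity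
    have hk3 : (0:ℚ) < (k:ℚ) + 3 := by positivity
    field_simp
    linarith
  have e4 : ∀ k, (m.choose k : ℚ) * ((264/29)/(((k:ℚ)+1)*((k:ℚ)+2)*((k:ℚ)+3)*((k:ℚ)+4)))
      = (264/29)/(((m:ℚ)+1)*((m:ℚ)+2)*((m:ℚ)+3)*((m:ℚ)+4)) * ((m+4).choose (k+4) : ℚ) := by
    intro k
    have hc : ((m:ℚ)+1)*((m:ℚ)+2)*((m:ℚ)+3)*((m:ℚ)+4)*(m.choose k : ℚ)
        = ((k:ℚ)+1)*((k:ℚ)+2)*((k:ℚ)+3)*((k:ℚ)+4)*((m+4).choose (k+4) : ℚ) := by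
      have := key4 m k
      have h2 : (((m+1)*(m+2)*(m+3)*(m+4) * m.choose k : ℕ) : ℚ)
          = (((k+1)*(k+2)*(k+3)*(k+4) * (m+4).choose (k+4) : ℕ) : ℚ) := by rw [this]
      push_cast at h2
      linarith
    have hk1 : (0:ℚ) < (k:ℚ) + 1 := by positivity
    have hk2 : (0:ℚ) < (k:ℚ) + 2 := by positivity
    have hk3 : (0:ℚ) < (k:ℚ) + 3 := by positivity
    have hk4 : (0:ℚ) < (k:ℚ) + 4 := by positivity
    field_simp
    linarith
  have s2 : ∑ k ∈ range (m+1), (m.choose k : ℚ) * (2/(((k:ℚ)+1)*((k:ℚ)+2)))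
      ≤ 2/(((m:ℚ)+1)*((m:ℚ)+2)) * 2^(m+2) := by
    rw [Finset.sum_congr rfl (fun k _ => e2 k), ← Finset.mul_sum]
    apply mul_le_mul_of_nonneg_left _ (by positivity)
    have := sum_choose_le m 2
    calc ∑ k ∈ range (m+1), ((m+2).choose (k+2) : ℚ)
        = ((∑ k ∈ range (m+1), (m+2).choose (k+2) : ℕ) : ℚ) := by push_cast; rfl
      _ ≤ ((2^(m+2) : ℕ) : ℚ) := by exact_mod_cast this
      _ = 2^(m+2) := by push_cast; rfl
  have s3 : ∑ k ∈ range (m+1), (m.choose k : ℚ) * (4/(((k:ℚ)+1)*((k:ℚ)+2)*((k:ℚ)+3)))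
      ≤ 4/(((m:ℚ)+1)*((m:ℚ)+2)*((m:ℚ)+3)) * 2^(m+3) := by
    rw [Finset.sum_congr rfl (fun k _ => e3 k), ← Finset.mul_sum]
    apply mul_le_mul_of_nonneg_left _ (by positivity)
    have := sum_choose_le m 3
    calc ∑ k ∈ range (m+1), ((m+3).choose (k+3) : ℚ)
        = ((∑ k ∈ range (m+1), (m+3).choose (k+3) : ℕ) : ℚ) := by push_cast; rfl
      _ ≤ ((2^(m+3) : ℕ) : ℚ) := by exact_mod_cast this
      _ = 2^(m+3) := by push_cast; rfl
  have s4 : ∑ k ∈ range (m+1),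
        (m.choose k : ℚ) * ((264/29)/(((k:ℚ)+1)*((k:ℚ)+2)*((k:ℚ)+3)*((k:ℚ)+4)))
      ≤ (264/29)/(((m:ℚ)+1)*((m:ℚ)+2)*((m:ℚ)+3)*((m:ℚ)+4)) * 2^(m+4) := by
    rw [Finset.sum_congr rfl (fun k _ => e4 k), ← Finset.mul_sum]
    apply mul_le_mul_of_nonneg_left _ (by positivity)
    have := sum_choose_le m 4
    calc ∑ k ∈ range (m+1), ((m+4).choose (k+4) : ℚ)
        = ((∑ k ∈ range (m+1), (m+4).choose (k+4) : ℕ) : ℚ) := by push_cast; rfl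
      _ ≤ ((2^(m+4) : ℕ) : ℚ) := by exact_mod_cast this
      _ = 2^(m+4) := by push_cast; rfl
  have hfin := final_ineq m hm
  calc ∑ k ∈ range (m+1), (m.choose k : ℚ) * ((g k : ℚ))⁻¹
      ≤ _ := step1
    _ ≤ 2/(((m:ℚ)+1)*((m:ℚ)+2)) * 2^(m+2)
        + 4/(((m:ℚ)+1)*((m:ℚ)+2)*((m:ℚ)+3)) * 2^(m+3)
        + (264/29)/(((m:ℚ)+1)*((m:ℚ)+2)*((m:ℚ)+3)*((m:ℚ)+4)) * 2^(m+4) := by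
        exact add_le_add (add_le_add s2 s3) s4
    _ = 2/(((m:ℚ)+1)*((m:ℚ)+2)) * 2^(m+2)
        + 4/(((m:ℚ)+1)*((m:ℚ)+2)*((m:ℚ)+3)) * 2^(m+3)
        + (264/29)/(((m:ℚ)+1)*((m:ℚ)+2)*((m:ℚ)+3)*((m:ℚ)+4)) * 2^(m+4) := by ring

    _ ≤ _ := hfin


end GrainAux

/-- For `n ≥ 14`, `M(n,2) ≤ 2⌊2^{n+2}(2 + 2/(n-6)) / (2n(n-3))⌋`. -/
theorem stmt13 {n : ℕ} (hn : 14 ≤ n)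
    (C : Finset (Fin n → ZMod 2)) (hC : grainCorrecting 2 C) :
    C.card ≤ 2 * ⌊(2 ^ (n + 2) * (2 + 2 / ((n : ℚ) - 6))) / (2 * (n : ℚ) * ((n : ℚ) - 3))⌋₊ := by
  classical
  obtain ⟨m, rfl⟩ : ∃ m, n = m + 1 := ⟨n - 1, by omega⟩
  have hm : 13 ≤ m := by omega
  set X : ℚ := (2 ^ (m + 1 + 2) * (2 + 2 / (((m+1 : ℕ) : ℚ) - 6)))
      / (2 * ((m+1 : ℕ) : ℚ) * (((m+1 : ℕ) : ℚ) - 3)) with hX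
  have hclass : ∀ b : ZMod 2, ((C.filter fun y => y 0 = b).card : ℚ) ≤ X := by
    intro b
    set Cb := C.filter fun y => y 0 = b with hCb
    set w : (Fin (m+1) → ZMod 2) → ℚ := fun y => ((GrainAux.g (GrainAux.bsetF y).card : ℚ))⁻¹
      with hw
    have hwpos : ∀ y, 0 ≤ w y := by
      intro y
      rw [hw]
      positivity
    have hmono : ∀ x : Fin (m+1) → ZMod 2, ∀ y ∈ GrainAux.ballI x,
        (GrainAux.bsetF y).card ≤ (GrainAux.bsetF x).card := by
      intro x y hy
      rw [GrainAux.ballI, Finset.mem_image] at hy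
      obtain ⟨T, hT, rfl⟩ := hy
      exact GrainAux.bset_mono x _ (GrainAux.ind_grainError x T hT)
    have hub : ∀ x ∈ Cb, (1:ℚ) ≤ ∑ y ∈ GrainAux.ballI x, w y := by
      intro x _
      exact GrainAux.ballI_sum x (hmono x)
    have hdisj : (Cb : Set (Fin (m+1) → ZMod 2)).PairwiseDisjoint GrainAux.ballI := by
      intro x hx x' hx' hne
      simp only [Finset.coe_filter, Set.mem_setOf_eq, hCb] at hx hx'
      have hdis := hC x hx.1 x' hx'.1 hne
      show Disjoint (GrainAux.ballI x) (GrainAux.ballI x')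
      rw [Finset.disjoint_left]
      intro y hy hy'
      exact Set.disjoint_left.mp hdis (GrainAux.ballI_sub x y hy) (GrainAux.ballI_sub x' y hy')
    have hsub : Cb.biUnion GrainAux.ballI
        ⊆ Finset.univ.filter (fun y : Fin (m+1) → ZMod 2 => y 0 = b) := by
      intro y hy
      rw [Finset.mem_biUnion] at hy
      obtain ⟨x, hx, hy⟩ := hy
      have h0 : y 0 = x 0 := GrainAux.ballI_first x 0 rfl y hy
      rw [Finset.mem_filter]
      refine ⟨Finset.mem_univ _, ?_⟩
      rw [h0]
      rw [hCb, Finset.mem_filter] at hx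
      exact hx.2
    calc (Cb.card : ℚ) = ∑ _x ∈ Cb, (1:ℚ) := by rw [Finset.sum_const, nsmul_eq_mul, mul_one]
      _ ≤ ∑ x ∈ Cb, ∑ y ∈ GrainAux.ballI x, w y := Finset.sum_le_sum hub
      _ = ∑ y ∈ Cb.biUnion GrainAux.ballI, w y := (Finset.sum_biUnion hdisj).symm
      _ ≤ ∑ y ∈ Finset.univ.filter (fun y : Fin (m+1) → ZMod 2 => y 0 = b), w y :=
          Finset.sum_le_sum_of_subset_of_nonneg hsub (fun y _ _ => hwpos y)
      _ = ∑ k ∈ Finset.range (m+1), (m.choose k : ℚ) * ((GrainAux.g k : ℚ))⁻¹ :=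
          GrainAux.sum_class m b (fun k => ((GrainAux.g k : ℚ))⁻¹)
      _ ≤ ((2:ℚ) ^ (m + 3) * (2 + 2 / (((m:ℚ)+1) - 6))) / (2 * ((m:ℚ)+1) * (((m:ℚ)+1) - 3)) :=
          GrainAux.main_sum m hm
      _ = X := by rw [hX]; push_cast; ring_nf
  have hfloor : ∀ b : ZMod 2, (C.filter fun y => y 0 = b).card ≤ ⌊X⌋₊ :=
    fun b => Nat.le_floor (hclass b)
  have hsplit : (C.filter fun y => y 0 = 0).card + (C.filter fun y => y 0 = 1).card
      = C.card := by
    have hneg : C.filter (fun y => ¬ (y 0 = 0)) = C.filter (fun y => y 0 = 1) := by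
      apply Finset.filter_congr
      intro y _
      have : ∀ a : ZMod 2, ¬ (a = 0) ↔ a = 1 := by decide
      exact this (y 0)
    rw [← hneg]
    exact Finset.card_filter_add_card_filter_not _
  have h0 := hfloor 0
  have h1 := hfloor 1
  calc C.card = (C.filter fun y => y 0 = 0).card + (C.filter fun y => y 0 = 1).card :=
        hsplit.symm
    _ ≤ ⌊X⌋₊ + ⌊X⌋₊ := Nat.add_le_add h0 h1
    _ = 2 * ⌊X⌋₊ := (two_mul _).symm
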